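/- Let q = 2^n with n even, and a ∈ F_{q^3}^*. If the map x ↦ x^{(q^2+q)/2} + a·x permutes F_{q^3}, then a^{q^2+q+1} = 1 and a^{(q^2+q+1)/3} ≠ 1. -/

import Mathlib

open Finset

/-- Geometric sum of powers of two. -/
lemma aux_geo2 : ∀ M : ℕ, (∑ j ∈ range M, 2 ^ j) + 1 = 2 ^ M := by
  intro M
  induction M with
  | zero => simp
  | succ M ih =>
    rw [Finset.sum_range_succ, pow_succ]
    omega

/-- A sum of distinct powers of two with exponents `< N` is `< 2 ^ N`. -/
lemma aux_two_pow_sum_lt (N : ℕ) (T : Finset ℕ) (hT : ∀ j ∈ T, j < N) :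
    ∑ j ∈ T, 2 ^ j < 2 ^ N := by
  have h1 : T ⊆ range N := fun j hj => mem_range.mpr (hT j hj)
  have h2 : ∑ j ∈ T, 2 ^ j ≤ ∑ j ∈ range N, 2 ^ j :=
    Finset.sum_le_sum_of_subset h1
  have h3 := aux_geo2 N
  omega

/-- Sums of distinct powers of two determine the set of exponents. -/
lemma aux_two_pow_sum_inj : ∀ (N : ℕ) (T T' : Finset ℕ),
    (∀ j ∈ T, j < N) → (∀ j ∈ T', j < N) →
    (∑ j ∈ T, 2 ^ j) = (∑ j ∈ T', 2 ^ j) → T = T' := by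
  intro N
  induction N with
  | zero =>
    intro T T' hT hT' _
    have h1 : T = ∅ := Finset.eq_empty_of_forall_notMem fun j hj => by
      exact absurd (hT j hj) (by omega)
    have h2 : T' = ∅ := Finset.eq_empty_of_forall_notMem fun j hj => by
      exact absurd (hT' j hj) (by omega)
    rw [h1, h2]
  | succ N ih =>
    intro T T' hT hT' hsum
    by_cases h1 : N ∈ T <;> by_cases h2 : N ∈ T'
    · have e1 : (∑ j ∈ T.erase N, 2 ^ j) + 2 ^ N = ∑ j ∈ T, 2 ^ j :=
        Finset.sum_erase_add T _ h1
      have e2 : (∑ j ∈ T'.erase N, 2 ^ j) + 2 ^ N = ∑ j ∈ T', 2 ^ j :=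
        Finset.sum_erase_add T' _ h2
      have heq : (∑ j ∈ T.erase N, 2 ^ j) = ∑ j ∈ T'.erase N, 2 ^ j := by omega
      have hb1 : ∀ j ∈ T.erase N, j < N := by
        intro j hj
        have h := Finset.mem_erase.mp hj
        have := hT j h.2
        have := h.1
        omega
      have hb2 : ∀ j ∈ T'.erase N, j < N := by
        intro j hj
        have h := Finset.mem_erase.mp hj
        have := hT' j h.2
        have := h.1
        omega
      have heq2 := ih (T.erase N) (T'.erase N) hb1 hb2 heq
      have hT1 : T = insert N (T.erase N) := (Finset.insert_erase h1).symm
      have hT2 : T' = insert N (T'.erase N) := (Finset.insert_erase h2).symm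
      rw [hT1, hT2, heq2]
    · exfalso
      have hle : 2 ^ N ≤ ∑ j ∈ T, 2 ^ j :=
        Finset.single_le_sum (fun i _ => Nat.zero_le _) h1
      have hlt : ∑ j ∈ T', 2 ^ j < 2 ^ N := by
        apply aux_two_pow_sum_lt
        intro j hj
        have hb := hT' j hj
        have : j ≠ N := fun hh => h2 (hh ▸ hj)
        omega
      omega
    · exfalso
      have hle : 2 ^ N ≤ ∑ j ∈ T', 2 ^ j :=
        Finset.single_le_sum (fun i _ => Nat.zero_le _) h2
      have hlt : ∑ j ∈ T, 2 ^ j < 2 ^ N := by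
        apply aux_two_pow_sum_lt
        intro j hj
        have hb := hT j hj
        have : j ≠ N := fun hh => h1 (hh ▸ hj)
        omega
      omega
    · apply ih T T' _ _ hsum
      · intro j hj
        have hb := hT j hj
        have : j ≠ N := fun hh => h1 (hh ▸ hj)
        omega
      · intro j hj
        have hb := hT' j hj
        have : j ≠ N := fun hh => h2 (hh ▸ hj)
        omega

/-- The "missing bit" lemma: a subset sum of powers of two avoiding exponent `n`
has small residue mod `2^(n+1)`. -/
lemma aux_bit (n : ℕ) (T : Finset ℕ) (hT : T ⊆ (range (2 * n + 1)).erase n) :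
    (∑ j ∈ T, 2 ^ j) % (2 ^ (n + 1)) < 2 ^ n := by
  classical
  have hsplit : (∑ j ∈ T.filter (fun j => j < n), 2 ^ j)
      + (∑ j ∈ T.filter (fun j => ¬ j < n), 2 ^ j) = ∑ j ∈ T, 2 ^ j :=
    Finset.sum_filter_add_sum_filter_not T _ _
  have hlow : (∑ j ∈ T.filter (fun j => j < n), 2 ^ j) < 2 ^ n := by
    apply aux_two_pow_sum_lt
    intro j hj
    exact (Finset.mem_filter.mp hj).2
  have hdvd : 2 ^ (n + 1) ∣ ∑ j ∈ T.filter (fun j => ¬ j < n), 2 ^ j := by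
    apply Finset.dvd_sum
    intro j hj
    obtain ⟨hjT, hjn⟩ := Finset.mem_filter.mp hj
    have hmem := hT hjT
    have hne := (Finset.mem_erase.mp hmem).1
    have : n + 1 ≤ j := by omega
    exact pow_dvd_pow 2 this
  obtain ⟨c, hc⟩ := hdvd
  have hrw : ∑ j ∈ T, 2 ^ j
      = (∑ j ∈ T.filter (fun j => j < n), 2 ^ j) + 2 ^ (n + 1) * c := by
    rw [← hsplit, hc]
  rw [hrw, Nat.add_mul_mod_self_left]
  have h2 : (2:ℕ) ^ (n+1) = 2 * 2 ^ n := by ring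
  rw [Nat.mod_eq_of_lt (by omega)]
  exact hlow

/-- Core number-theoretic classification of exponents `i` giving divisible terms. -/
lemma aux_classify (s s2 s3 i l : ℕ) (hs2 : s2 = s * s) (hs3 : s3 = s * s * s)
    (hil : i + l = 288 * s2 + 180 * s + 27)
    (hmod : i % (24 * s + 8) < 12 * s + 4)
    (hdvd : (1728 * s3 + 1728 * s2 + 576 * s + 63) ∣ (2 * i + (144 * s2 + 108 * s + 20) * l)) :
    i = 48 * s2 + 24 * s + 2 ∨ i = 96 * s2 + 60 * s + 9 ∨ i = 144 * s2 + 96 * s + 16 := by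
  obtain ⟨c, hc⟩ := hdvd
  have hcZ : 2 * (i:ℤ) + (144 * (s:ℤ)^2 + 108 * (s:ℤ) + 20) * (l:ℤ)
      = (1728 * (s:ℤ)^3 + 1728 * (s:ℤ)^2 + 576 * (s:ℤ) + 63) * (c:ℤ) := by
    have h1 := congrArg (Nat.cast : ℕ → ℤ) hc
    rw [hs2, hs3] at h1
    push_cast at h1
    linear_combination h1
  have hlZ : (l:ℤ) = (288 * (s:ℤ)^2 + 180 * (s:ℤ) + 27) - (i:ℤ) := by
    have h1 := congrArg (Nat.cast : ℕ → ℤ) hil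
    rw [hs2] at h1
    push_cast at h1
    linear_combination h1
  rw [hlZ] at hcZ
  have hkey : (1728 * (s:ℤ)^3 + 1728 * (s:ℤ)^2 + 576 * (s:ℤ) + 63)
      ∣ ((48 * (s:ℤ)^2 + 24 * (s:ℤ) + 2 - (i:ℤ)) * (144 * (s:ℤ)^2 + 108 * (s:ℤ) + 18)) :=
    ⟨(c:ℤ) - (20 * (s:ℤ) + 8), by linear_combination hcZ⟩
  obtain ⟨e, he⟩ := hkey
  have h123 : (12 * (s:ℤ) + 3) ≠ 0 := by
    have : (0:ℤ) ≤ (s:ℤ) := Int.natCast_nonneg s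
    omega
  have he2 : (12 * (s:ℤ) + 3) * ((48 * (s:ℤ)^2 + 24 * (s:ℤ) + 2 - (i:ℤ)) * (12 * (s:ℤ) + 6))
      = (12 * (s:ℤ) + 3) * ((48 * (s:ℤ)^2 + 36 * (s:ℤ) + 7) * (3 * e)) := by
    linear_combination he
  have he3 := mul_left_cancel₀ h123 he2
  have hMdvd : (48 * (s:ℤ)^2 + 36 * (s:ℤ) + 7)
      ∣ (48 * (s:ℤ)^2 + 24 * (s:ℤ) + 2 - (i:ℤ)) * (12 * (s:ℤ) + 6) := ⟨3 * e, he3⟩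
  have hcop : IsCoprime (48 * (s:ℤ)^2 + 36 * (s:ℤ) + 7) (12 * (s:ℤ) + 6) := by
    have hnat : Nat.gcd (48 * s2 + 36 * s + 7) (12 * s + 6) = 1 := by
      set g := Nat.gcd (48 * s2 + 36 * s + 7) (12 * s + 6) with hg
      have hg1 : g ∣ 48 * s2 + 36 * s + 7 := Nat.gcd_dvd_left _ _
      have hg2 : g ∣ 12 * s + 6 := Nat.gcd_dvd_right _ _
      have hg3 : g ∣ 144 * s2 + 108 * s + 18 := by
        have hh : (12 * s + 6) * (12 * s + 3) = 144 * s2 + 108 * s + 18 := by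
          rw [hs2]; ring
        exact hh ▸ Dvd.dvd.mul_right hg2 _
      have hg4 : g ∣ 144 * s2 + 108 * s + 21 := by
        have hh : (48 * s2 + 36 * s + 7) * 3 = 144 * s2 + 108 * s + 21 := by ring
        exact hh ▸ Dvd.dvd.mul_right hg1 _
      have hg5 : g ∣ 3 := by
        have hd := Nat.dvd_sub hg4 hg3
        have h3 : 144 * s2 + 108 * s + 21 - (144 * s2 + 108 * s + 18) = 3 := by omega
        rwa [h3] at hd
      have hgle : g ≤ 3 := Nat.le_of_dvd (by norm_num) hg5
      interval_cases g
      · omega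
      · rfl
      · exfalso
        obtain ⟨x, hx⟩ := hg1
        omega
      · exfalso
        obtain ⟨x, hx⟩ := hg5
        omega
    rw [Int.isCoprime_iff_gcd_eq_one]
    have hc1 : ((48 * s2 + 36 * s + 7 : ℕ) : ℤ) = 48 * (s:ℤ)^2 + 36 * (s:ℤ) + 7 := by
      rw [hs2]; push_cast; ring
    have hc2 : ((12 * s + 6 : ℕ) : ℤ) = 12 * (s:ℤ) + 6 := by push_cast; ring
    rw [← hc1, ← hc2, Int.gcd_natCast_natCast, hnat]
  have hMi : (48 * (s:ℤ)^2 + 36 * (s:ℤ) + 7)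
      ∣ (48 * (s:ℤ)^2 + 24 * (s:ℤ) + 2 - (i:ℤ)) :=
    hcop.dvd_of_dvd_mul_right hMdvd
  obtain ⟨t, ht⟩ := hMi
  have hSpos : (0:ℤ) ≤ (s:ℤ) := Int.natCast_nonneg s
  have hS2 : (s:ℤ)^2 = (s:ℤ) * (s:ℤ) := sq (s:ℤ) ▸ rfl
  have hS2pos : (0:ℤ) ≤ (s:ℤ)^2 := sq_nonneg _
  have hMpos : (0:ℤ) < 48 * (s:ℤ)^2 + 36 * (s:ℤ) + 7 := by positivity
  have hipos : (0:ℤ) ≤ (i:ℤ) := Int.natCast_nonneg i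
  have hile : (i:ℤ) ≤ 288 * (s:ℤ)^2 + 180 * (s:ℤ) + 27 := by
    have hl0 : (0:ℤ) ≤ (l:ℤ) := Int.natCast_nonneg l
    linarith [hlZ]
  have ht1 : t < 1 := by
    by_contra hcon
    push_neg at hcon
    have hmm : (48 * (s:ℤ)^2 + 36 * (s:ℤ) + 7) * 1 ≤ (48 * (s:ℤ)^2 + 36 * (s:ℤ) + 7) * t :=
      mul_le_mul_of_nonneg_left hcon (le_of_lt hMpos)
    linarith [ht, hipos, hmm]
  have ht2 : -5 < t := by
    by_contra hcon
    push_neg at hcon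
    have hmm : (48 * (s:ℤ)^2 + 36 * (s:ℤ) + 7) * t ≤ (48 * (s:ℤ)^2 + 36 * (s:ℤ) + 7) * (-5) :=
      mul_le_mul_of_nonneg_left hcon (le_of_lt hMpos)
    linarith [ht, hile, hmm]
  have hlb : -4 ≤ t := by omega
  have hub : t ≤ 0 := by omega
  interval_cases t
  · -- t = -4 : i = σ₀ + 4m, excluded by the missing bit
    exfalso
    have hiZ : (i:ℤ) = 240 * (s:ℤ)^2 + 168 * (s:ℤ) + 30 := by linarith [ht]
    have hiN : i = 240 * s2 + 168 * s + 30 := by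
      have hcast : ((240 * s2 + 168 * s + 30 : ℕ) : ℤ)
          = 240 * (s:ℤ)^2 + 168 * (s:ℤ) + 30 := by rw [hs2]; push_cast; ring
      exact_mod_cast hiZ.trans hcast.symm
    have hrep : 240 * s2 + 168 * s + 30 = (24 * s + 8) * (10 * s + 3) + (16 * s + 6) := by
      rw [hs2]; ring
    rw [hiN, hrep, Nat.mul_add_mod, Nat.mod_eq_of_lt (by omega)] at hmod
    omega
  · -- t = -3 : i = σ₀ + 3m, excluded by the missing bit
    exfalso
    have hiZ : (i:ℤ) = 192 * (s:ℤ)^2 + 132 * (s:ℤ) + 23 := by linarith [ht]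
    have hiN : i = 192 * s2 + 132 * s + 23 := by
      have hcast : ((192 * s2 + 132 * s + 23 : ℕ) : ℤ)
          = 192 * (s:ℤ)^2 + 132 * (s:ℤ) + 23 := by rw [hs2]; push_cast; ring
      exact_mod_cast hiZ.trans hcast.symm
    have hrep : 192 * s2 + 132 * s + 23 = (24 * s + 8) * (8 * s + 2) + (20 * s + 7) := by
      rw [hs2]; ring
    rw [hiN, hrep, Nat.mul_add_mod, Nat.mod_eq_of_lt (by omega)] at hmod
    omega
  · -- t = -2 : i = σ₂ = q²
    right; right
    have hiZ : (i:ℤ) = 144 * (s:ℤ)^2 + 96 * (s:ℤ) + 16 := by linarith [ht]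
    have hcast : ((144 * s2 + 96 * s + 16 : ℕ) : ℤ)
        = 144 * (s:ℤ)^2 + 96 * (s:ℤ) + 16 := by rw [hs2]; push_cast; ring
    exact_mod_cast hiZ.trans hcast.symm
  · -- t = -1 : i = σ₁
    right; left
    have hiZ : (i:ℤ) = 96 * (s:ℤ)^2 + 60 * (s:ℤ) + 9 := by linarith [ht]
    have hcast : ((96 * s2 + 60 * s + 9 : ℕ) : ℤ)
        = 96 * (s:ℤ)^2 + 60 * (s:ℤ) + 9 := by rw [hs2]; push_cast; ring
    exact_mod_cast hiZ.trans hcast.symm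
  · -- t = 0 : i = σ₀
    left
    have hiZ : (i:ℤ) = 48 * (s:ℤ)^2 + 24 * (s:ℤ) + 2 := by linarith [ht]
    have hcast : ((48 * s2 + 24 * s + 2 : ℕ) : ℤ)
        = 48 * (s:ℤ)^2 + 24 * (s:ℤ) + 2 := by rw [hs2]; push_cast; ring
    exact_mod_cast hiZ.trans hcast.symm

theorem stmt6 (n : ℕ) (hn : Even n) (h0 : 0 < n)
    (F : Type*) [Field F] [Fintype F] (hF : Fintype.card F = (2 ^ n) ^ 3)
    (a : F) (ha : a ≠ 0)
    (h : Function.Bijective (fun x : F => x ^ (((2 ^ n) ^ 2 + 2 ^ n) / 2) + a * x)) :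
    a ^ ((2 ^ n) ^ 2 + 2 ^ n + 1) = 1 ∧ a ^ (((2 ^ n) ^ 2 + 2 ^ n + 1) / 3) ≠ 1 := by
  classical
  ------------------------------------------------------------------
  -- Step 0 : characteristic 2
  ------------------------------------------------------------------
  obtain ⟨p, hp⟩ := CharP.exists F
  obtain ⟨np, hpp, hcard⟩ := @FiniteField.card F _ _ p hp
  have hp2 : p = 2 := by
    have hdvd : p ∣ 2 ^ (n * 3) := by
      have h1 : p ∣ p ^ (np : ℕ) := dvd_pow_self p (by positivity)
      rw [← hcard] at h1
      rw [hF, ← pow_mul] at h1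
      exact h1
    exact (Nat.prime_dvd_prime_iff_eq hpp Nat.prime_two).mp (hpp.dvd_of_dvd_pow hdvd)
  subst hp2
  haveI hchar : CharP F 2 := hp
  haveI : Fact (Nat.Prime 2) := ⟨Nat.prime_two⟩
  have h2F : (2 : F) = 0 := by exact_mod_cast CharP.cast_eq_zero F 2
  ------------------------------------------------------------------
  -- Step 1 : arithmetic setup, q = 2^n = 12 s + 4
  ------------------------------------------------------------------
  obtain ⟨hh, hhh⟩ := hn
  have hh1 : 1 ≤ hh := by omega
  obtain ⟨d, hd⟩ : ∃ d, hh = d + 1 := ⟨hh - 1, by omega⟩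
  set s : ℕ := ∑ t ∈ range d, 4 ^ t with hs
  obtain ⟨s2, hs2⟩ : ∃ x, x = s * s := ⟨_, rfl⟩
  obtain ⟨s3, hs3⟩ : ∃ x, x = s * s * s := ⟨_, rfl⟩
  have hgeo4 : ∀ M : ℕ, 3 * (∑ t ∈ range M, 4 ^ t) + 1 = 4 ^ M := by
    intro M
    induction M with
    | zero => simp
    | succ M ih => rw [Finset.sum_range_succ, pow_succ]; omega
  have h4d : 3 * s + 1 = 4 ^ d := hgeo4 d
  have hq : 2 ^ n = 12 * s + 4 := by
    have h1 : (2:ℕ) ^ n = 4 ^ hh := by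
      rw [hhh, ← two_mul, pow_mul]
      norm_num
    rw [h1, hd, pow_succ, ← h4d]
    ring
  have hn2 : n = 2 * hh := by omega
  ------------------------------------------------------------------
  -- Step 2 : the exponent k and the index set B
  ------------------------------------------------------------------
  set B : Finset ℕ := (range (2 * n + 1)).erase n with hB
  set k : ℕ := ∑ j ∈ B, 2 ^ j with hk
  have hnB : n ∈ range (2 * n + 1) := mem_range.mpr (by omega)
  have hksum : k + 2 ^ n = ∑ j ∈ range (2 * n + 1), 2 ^ j :=
    Finset.sum_erase_add _ _ hnB
  have htot : (∑ j ∈ range (2 * n + 1), 2 ^ j) + 1 = 2 ^ (2 * n + 1) := aux_geo2 _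
  have h2n1 : (2:ℕ) ^ (2 * n + 1) = 2 * ((2 ^ n) * (2 ^ n)) := by
    rw [pow_succ, two_mul n, pow_add]
    ring
  have hkval : k = 288 * s2 + 180 * s + 27 := by
    have e1 : 2 * ((2 ^ n) * (2 ^ n)) = 2 * ((12 * s + 4) * (12 * s + 4)) := by rw [hq]
    have e2 : 2 * ((12 * s + 4) * (12 * s + 4)) = 288 * s2 + 192 * s + 32 := by
      rw [hs2]; ring
    have e3 : (2:ℕ) ^ n = 12 * s + 4 := hq
    omega
  ------------------------------------------------------------------
  -- Step 3 : the bijection G y = a y² + y^(q²+q)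
  ------------------------------------------------------------------
  have hQQ : (2 ^ n) ^ 2 + 2 ^ n = 144 * s2 + 108 * s + 20 := by
    rw [hq, hs2]; ring
  have hQQdvd : 2 ∣ (2 ^ n) ^ 2 + 2 ^ n := by
    rw [hQQ]
    exact ⟨72 * s2 + 54 * s + 10, by ring⟩
  set G : F → F := fun y => a * y ^ 2 + y ^ ((2 ^ n) ^ 2 + 2 ^ n) with hG
  have hsqbij : Function.Bijective (fun y : F => y ^ 2) := by
    rw [Finite.injective_iff_bijective.symm]
    intro x y hxy
    simp only at hxy
    have hxy2 : (x + y) ^ 2 = 0 := by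
      have hfr : (x + y) ^ 2 = x ^ 2 + y ^ 2 := by linear_combination (x * y) * h2F
      rw [hfr, hxy, CharTwo.add_self_eq_zero]
    have hxy0 : x + y = 0 := by
      exact pow_eq_zero_iff (by norm_num) |>.mp hxy2
    have hxny : x = -y := eq_neg_of_add_eq_zero_left hxy0
    rw [CharTwo.neg_eq] at hxny
    exact hxny
  have hGbij : Function.Bijective G := by
    have hcomp : (fun x : F => x ^ (((2 ^ n) ^ 2 + 2 ^ n) / 2) + a * x)
        ∘ (fun y : F => y ^ 2) = G := by
      funext y
      simp only [Function.comp_apply, hG]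
      rw [← pow_mul, Nat.mul_div_cancel' hQQdvd, add_comm]
    rw [← hcomp]
    exact h.comp hsqbij
  ------------------------------------------------------------------
  -- Step 4 : the power sum vanishes
  ------------------------------------------------------------------
  have hC : Fintype.card F - 1 = 1728 * s3 + 1728 * s2 + 576 * s + 63 := by
    have e1 : (12 * s + 4) ^ 3 = 1728 * s3 + 1728 * s2 + 576 * s + 64 := by
      rw [hs3, hs2]; ring
    have e2 : Fintype.card F = 1728 * s3 + 1728 * s2 + 576 * s + 64 := by
      rw [hF, hq, e1]
    omega
  have hklt : k < Fintype.card F - 1 := by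
    rw [hkval, hC]
    have : 0 ≤ s3 := Nat.zero_le _
    omega
  have hsum0 : ∑ y : F, (G y) ^ k = 0 := by
    have h1 : ∑ y : F, (G y) ^ k = ∑ x : F, x ^ k :=
      hGbij.sum_comp (fun x => x ^ k)
    rw [h1]
    exact FiniteField.sum_pow_lt_card_sub_one F k hklt
  ------------------------------------------------------------------
  -- Step 5 : expansion of the power sum over subsets of B
  ------------------------------------------------------------------
  have expand : ∀ y : F, (G y) ^ k
      = ∑ T ∈ B.powerset, a ^ (∑ j ∈ T, 2 ^ j)
          * y ^ (2 * (∑ j ∈ T, 2 ^ j) + ((2 ^ n) ^ 2 + 2 ^ n) * (∑ j ∈ B \ T, 2 ^ j)) := by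
    intro y
    have e1 : (G y) ^ k = ∏ j ∈ B, ((a * y ^ 2) ^ 2 ^ j + (y ^ ((2 ^ n) ^ 2 + 2 ^ n)) ^ 2 ^ j) := by
      rw [hk, ← Finset.prod_pow_eq_pow_sum]
      exact Finset.prod_congr rfl fun j _ => by
        rw [hG]
        exact add_pow_char_pow ..
    rw [e1, Finset.prod_add]
    refine Finset.sum_congr rfl fun T hT => ?_
    rw [Finset.prod_pow_eq_pow_sum T (fun j => 2 ^ j) (a * y ^ 2),
      Finset.prod_pow_eq_pow_sum (B \ T) (fun j => 2 ^ j) (y ^ ((2 ^ n) ^ 2 + 2 ^ n)),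
      mul_pow, ← pow_mul, ← pow_mul, mul_assoc, ← pow_add]
  have hswap : ∑ T ∈ B.powerset, a ^ (∑ j ∈ T, 2 ^ j)
      * ∑ y : F, y ^ (2 * (∑ j ∈ T, 2 ^ j) + ((2 ^ n) ^ 2 + 2 ^ n) * (∑ j ∈ B \ T, 2 ^ j))
      = 0 := by
    rw [← hsum0]
    calc ∑ T ∈ B.powerset, a ^ (∑ j ∈ T, 2 ^ j)
          * ∑ y : F, y ^ (2 * (∑ j ∈ T, 2 ^ j) + ((2 ^ n) ^ 2 + 2 ^ n) * (∑ j ∈ B \ T, 2 ^ j))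
        = ∑ T ∈ B.powerset, ∑ y : F, a ^ (∑ j ∈ T, 2 ^ j)
            * y ^ (2 * (∑ j ∈ T, 2 ^ j) + ((2 ^ n) ^ 2 + 2 ^ n) * (∑ j ∈ B \ T, 2 ^ j)) :=
          Finset.sum_congr rfl fun T _ => Finset.mul_sum _ _ _
      _ = ∑ y : F, ∑ T ∈ B.powerset, a ^ (∑ j ∈ T, 2 ^ j)
            * y ^ (2 * (∑ j ∈ T, 2 ^ j) + ((2 ^ n) ^ 2 + 2 ^ n) * (∑ j ∈ B \ T, 2 ^ j)) :=
          Finset.sum_comm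
      _ = ∑ y : F, (G y) ^ k := Finset.sum_congr rfl fun y _ => (expand y).symm
  ------------------------------------------------------------------
  -- Step 6 : evaluation of the inner sums
  ------------------------------------------------------------------
  have hcard1 : 1 ≤ Fintype.card F := Fintype.card_pos
  have hCpos : 0 < Fintype.card F - 1 := by rw [hC]; omega
  have evalDvd : ∀ c : ℕ, 0 < c → ∑ y : F, y ^ (c * (Fintype.card F - 1)) = -1 := by
    intro c hc
    have h1 : ∀ y : F, y ^ (c * (Fintype.card F - 1)) = if y = (0:F) then 0 else 1 := by
      intro y
      by_cases hy : y = 0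
      · rw [hy, if_pos rfl]
        exact zero_pow (Nat.mul_pos hc hCpos).ne'
      · rw [if_neg hy, mul_comm, pow_mul, FiniteField.pow_card_sub_one_eq_one y hy, one_pow]
    rw [Finset.sum_congr rfl fun y _ => h1 y]
    rw [← Finset.add_sum_erase Finset.univ _ (Finset.mem_univ (0:F))]
    rw [if_pos rfl, zero_add]
    rw [Finset.sum_congr rfl (fun y hy => if_neg (Finset.mem_erase.mp hy).1)]
    rw [Finset.sum_const, Finset.card_erase_of_mem (Finset.mem_univ _), Finset.card_univ,
      nsmul_eq_mul, mul_one, Nat.cast_sub hcard1, Nat.cast_one,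
      FiniteField.cast_card_eq_zero, zero_sub]
  have evalNdvd : ∀ E : ℕ, 0 < E → ¬ ((Fintype.card F - 1) ∣ E) → ∑ y : F, y ^ E = 0 := by
    intro E hE hnd
    have hr : E % (Fintype.card F - 1) ≠ 0 := fun hcon =>
      hnd (Nat.dvd_of_mod_eq_zero hcon)
    have hrlt : E % (Fintype.card F - 1) < Fintype.card F - 1 := Nat.mod_lt _ hCpos
    have h1 : ∀ y : F, y ^ E = y ^ (E % (Fintype.card F - 1)) := by
      intro y
      by_cases hy : y = 0
      · rw [hy, zero_pow (by omega), zero_pow hr]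
      · conv_lhs => rw [← Nat.div_add_mod E (Fintype.card F - 1)]
        rw [pow_add, pow_mul, FiniteField.pow_card_sub_one_eq_one y hy, one_pow, one_mul]
    rw [Finset.sum_congr rfl fun y _ => h1 y]
    exact FiniteField.sum_pow_lt_card_sub_one F _ hrlt
  ------------------------------------------------------------------
  -- Step 7 : the three special subsets
  ------------------------------------------------------------------
  set T0f : Finset ℕ :=
    ((range hh).image (fun t => 2 * t + 1)) ∪ ((range d).image (fun t => n + 2 + 2 * t))
    with hT0f
  set T1f : Finset ℕ :=
    ((range hh).image (fun t => 2 * t)) ∪ ((range hh).image (fun t => n + 1 + 2 * t))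
    with hT1f
  set T2f : Finset ℕ := {2 * n} with hT2f
  -- subset facts
  have hT0B : T0f ⊆ B := by
    intro j hj
    rw [hT0f, Finset.mem_union] at hj
    rw [hB, Finset.mem_erase]
    rcases hj with hj | hj <;> obtain ⟨t, ht, rfl⟩ := Finset.mem_image.mp hj <;>
      rw [Finset.mem_range] at ht <;> constructor <;> [skip; skip; skip; skip] <;>
      first
        | (rw [Finset.mem_range]; omega)
        | omega
  have hT1B : T1f ⊆ B := by
    intro j hj
    rw [hT1f, Finset.mem_union] at hj
    rw [hB, Finset.mem_erase]
    rcases hj with hj | hj <;> obtain ⟨t, ht, rfl⟩ := Finset.mem_image.mp hj <;>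
      rw [Finset.mem_range] at ht <;> constructor <;>
      first
        | (rw [Finset.mem_range]; omega)
        | omega
  have hT2B : T2f ⊆ B := by
    intro j hj
    rw [hT2f, Finset.mem_singleton] at hj
    rw [hB, Finset.mem_erase, hj]
    exact ⟨by omega, Finset.mem_range.mpr (by omega)⟩
  -- sum computations
  have hs4 : ∑ t ∈ range hh, 4 ^ t = 4 * s + 1 := by
    rw [hd, Finset.sum_range_succ']
    have e1 : ∀ t, (4:ℕ) ^ (t + 1) = 4 * 4 ^ t := fun t => by rw [pow_succ]; ring
    rw [Finset.sum_congr rfl fun t _ => e1 t, ← Finset.mul_sum, ← hs]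
    simp
  have h2n1' : (2:ℕ) ^ (n + 1) = 24 * s + 8 := by rw [pow_succ, hq]; ring
  have h2n2' : (2:ℕ) ^ (n + 2) = 48 * s + 16 := by
    rw [pow_succ, h2n1']; ring
  have hIT2 : ∑ j ∈ T2f, 2 ^ j = 144 * s2 + 96 * s + 16 := by
    rw [hT2f, Finset.sum_singleton, two_mul, pow_add, hq, hs2]
    ring
  have hIT1 : ∑ j ∈ T1f, 2 ^ j = 96 * s2 + 60 * s + 9 := by
    rw [hT1f, Finset.sum_union, Finset.sum_image (by intro x _ y _ hxy; simp only at hxy; omega),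
      Finset.sum_image (by intro x _ y _ hxy; simp only at hxy; omega)]
    · have e1 : ∀ t, (2:ℕ) ^ (2 * t) = 4 ^ t := fun t => by
        rw [pow_mul]; norm_num
      have e2 : ∀ t, (2:ℕ) ^ (n + 1 + 2 * t) = (24 * s + 8) * 4 ^ t := fun t => by
        rw [pow_add, h2n1', pow_mul]; norm_num
      rw [Finset.sum_congr rfl fun t _ => e1 t, Finset.sum_congr rfl fun t _ => e2 t,
        ← Finset.mul_sum, hs4, hs2]
      ring
    · rw [Finset.disjoint_left]
      intro j hj1 hj2
      obtain ⟨t, ht, rfl⟩ := Finset.mem_image.mp hj1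
      obtain ⟨t', ht', he⟩ := Finset.mem_image.mp hj2
      rw [Finset.mem_range] at ht ht'
      omega
  have hIT0 : ∑ j ∈ T0f, 2 ^ j = 48 * s2 + 24 * s + 2 := by
    rw [hT0f, Finset.sum_union, Finset.sum_image (by intro x _ y _ hxy; simp only at hxy; omega),
      Finset.sum_image (by intro x _ y _ hxy; simp only at hxy; omega)]
    · have e1 : ∀ t, (2:ℕ) ^ (2 * t + 1) = 2 * 4 ^ t := fun t => by
        rw [pow_succ, pow_mul]; norm_num; ring
      have e2 : ∀ t, (2:ℕ) ^ (n + 2 + 2 * t) = (48 * s + 16) * 4 ^ t := fun t => by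
        rw [pow_add, h2n2', pow_mul]; norm_num
      rw [Finset.sum_congr rfl fun t _ => e1 t, Finset.sum_congr rfl fun t _ => e2 t,
        ← Finset.mul_sum, ← Finset.mul_sum, hs4, ← hs, hs2]
      ring
    · rw [Finset.disjoint_left]
      intro j hj1 hj2
      obtain ⟨t, ht, rfl⟩ := Finset.mem_image.mp hj1
      obtain ⟨t', ht', he⟩ := Finset.mem_image.mp hj2
      rw [Finset.mem_range] at ht ht'
      omega
  -- complement sums
  have hLT0 : ∑ j ∈ B \ T0f, 2 ^ j = 240 * s2 + 156 * s + 25 := by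
    have hsd := Finset.sum_sdiff (f := fun j => (2:ℕ) ^ j) hT0B
    omega
  have hLT1 : ∑ j ∈ B \ T1f, 2 ^ j = 192 * s2 + 120 * s + 18 := by
    have hsd := Finset.sum_sdiff (f := fun j => (2:ℕ) ^ j) hT1B
    omega
  have hLT2 : ∑ j ∈ B \ T2f, 2 ^ j = 144 * s2 + 84 * s + 11 := by
    have hsd := Finset.sum_sdiff (f := fun j => (2:ℕ) ^ j) hT2B
    omega
  -- divisibility identities for the three good subsets
  have hE0 : 2 * (48 * s2 + 24 * s + 2) + (144 * s2 + 108 * s + 20) * (240 * s2 + 156 * s + 25)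
      = (20 * s + 8) * (Fintype.card F - 1) := by
    rw [hC, hs2, hs3]; ring
  have hE1 : 2 * (96 * s2 + 60 * s + 9) + (144 * s2 + 108 * s + 20) * (192 * s2 + 120 * s + 18)
      = (16 * s + 6) * (Fintype.card F - 1) := by
    rw [hC, hs2, hs3]; ring
  have hE2 : 2 * (144 * s2 + 96 * s + 16) + (144 * s2 + 108 * s + 20) * (144 * s2 + 84 * s + 11)
      = (12 * s + 4) * (Fintype.card F - 1) := by
    rw [hC, hs2, hs3]; ring
  ------------------------------------------------------------------
  -- Step 8 : all other subsets give vanishing terms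
  ------------------------------------------------------------------
  set Trip : Finset (Finset ℕ) := {T0f, T1f, T2f} with hTrip
  have hTripSub : Trip ⊆ B.powerset := by
    intro T hT
    rw [hTrip, Finset.mem_insert, Finset.mem_insert, Finset.mem_singleton] at hT
    rw [Finset.mem_powerset]
    rcases hT with rfl | rfl | rfl
    · exact hT0B
    · exact hT1B
    · exact hT2B
  have hvanish : ∀ T ∈ B.powerset, T ∉ Trip →
      a ^ (∑ j ∈ T, 2 ^ j)
        * ∑ y : F, y ^ (2 * (∑ j ∈ T, 2 ^ j)
            + ((2 ^ n) ^ 2 + 2 ^ n) * (∑ j ∈ B \ T, 2 ^ j)) = 0 := by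
    intro T hTp hTn
    have hTB : T ⊆ B := Finset.mem_powerset.mp hTp
    have hilk : (∑ j ∈ B \ T, 2 ^ j) + (∑ j ∈ T, 2 ^ j) = k :=
      Finset.sum_sdiff hTB
    have hpos : 0 < 2 * (∑ j ∈ T, 2 ^ j)
        + ((2 ^ n) ^ 2 + 2 ^ n) * (∑ j ∈ B \ T, 2 ^ j) := by
      rcases Nat.eq_zero_or_pos (∑ j ∈ B \ T, 2 ^ j) with hl | hl
      · have : (∑ j ∈ T, 2 ^ j) = k := by omega
        omega
      · have h1 : 0 < ((2 ^ n) ^ 2 + 2 ^ n) * (∑ j ∈ B \ T, 2 ^ j) :=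
          Nat.mul_pos (by rw [hQQ]; omega) hl
        omega
    have hnd : ¬ ((Fintype.card F - 1)
        ∣ (2 * (∑ j ∈ T, 2 ^ j) + ((2 ^ n) ^ 2 + 2 ^ n) * (∑ j ∈ B \ T, 2 ^ j))) := by
      intro hdd
      rw [hC, hQQ] at hdd
      have hbit := aux_bit n T (hB ▸ hTB)
      rw [h2n1', hq] at hbit
      have hclass := aux_classify s s2 s3 (∑ j ∈ T, 2 ^ j) (∑ j ∈ B \ T, 2 ^ j)
        hs2 hs3 (by omega) hbit hdd
      have hTbound : ∀ j ∈ T, j < 2 * n + 1 := fun j hj =>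
        Finset.mem_range.mp (Finset.mem_of_mem_erase (hB ▸ hTB hj))
      have hT0bound : ∀ j ∈ T0f, j < 2 * n + 1 := fun j hj =>
        Finset.mem_range.mp (Finset.mem_of_mem_erase (hB ▸ hT0B hj))
      have hT1bound : ∀ j ∈ T1f, j < 2 * n + 1 := fun j hj =>
        Finset.mem_range.mp (Finset.mem_of_mem_erase (hB ▸ hT1B hj))
      have hT2bound : ∀ j ∈ T2f, j < 2 * n + 1 := fun j hj =>
        Finset.mem_range.mp (Finset.mem_of_mem_erase (hB ▸ hT2B hj))
      rcases hclass with hcase | hcase | hcase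
      · have : T = T0f := aux_two_pow_sum_inj (2 * n + 1) T T0f hTbound hT0bound
          (by rw [hcase, hIT0])
        exact hTn (by rw [this, hTrip]; exact Finset.mem_insert_self _ _)
      · have : T = T1f := aux_two_pow_sum_inj (2 * n + 1) T T1f hTbound hT1bound
          (by rw [hcase, hIT1])
        exact hTn (by
          rw [this, hTrip]
          exact Finset.mem_insert_of_mem (Finset.mem_insert_self _ _))
      · have : T = T2f := aux_two_pow_sum_inj (2 * n + 1) T T2f hTbound hT2bound
          (by rw [hcase, hIT2])
        exact hTn (by
          rw [this, hTrip]
          exact Finset.mem_insert_of_mem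
            (Finset.mem_insert_of_mem (Finset.mem_singleton_self _)))
    rw [evalNdvd _ hpos hnd, mul_zero]
  ------------------------------------------------------------------
  -- Step 9 : assembling the three surviving terms
  ------------------------------------------------------------------
  have hmain : ∑ T ∈ Trip, a ^ (∑ j ∈ T, 2 ^ j)
      * ∑ y : F, y ^ (2 * (∑ j ∈ T, 2 ^ j)
          + ((2 ^ n) ^ 2 + 2 ^ n) * (∑ j ∈ B \ T, 2 ^ j)) = 0 := by
    rw [Finset.sum_subset hTripSub hvanish]
    exact hswap
  have hne01 : T0f ≠ T1f := by
    intro he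
    rw [he] at hIT0
    omega
  have hne02 : T0f ≠ T2f := by
    intro he
    rw [he] at hIT0
    omega
  have hne12 : T1f ≠ T2f := by
    intro he
    rw [he] at hIT1
    omega
  rw [hTrip, Finset.sum_insert (by
      rw [Finset.mem_insert, Finset.mem_singleton]
      exact fun hcon => hcon.elim hne01 hne02),
    Finset.sum_insert (Finset.mem_singleton.not.mpr hne12),
    Finset.sum_singleton] at hmain
  rw [hIT0, hIT1, hIT2, hLT0, hLT1, hLT2, hQQ, hE0, hE1, hE2,
    evalDvd _ (by omega), evalDvd _ (by omega), evalDvd _ (by omega)] at hmain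
  have hsum3 : a ^ (48 * s2 + 24 * s + 2) + a ^ (96 * s2 + 60 * s + 9)
      + a ^ (144 * s2 + 96 * s + 16) = 0 := by
    linear_combination -hmain
  have e1 : 96 * s2 + 60 * s + 9 = (48 * s2 + 24 * s + 2) + (48 * s2 + 36 * s + 7) := by
    omega
  have e2 : 144 * s2 + 96 * s + 16
      = ((48 * s2 + 24 * s + 2) + (48 * s2 + 36 * s + 7)) + (48 * s2 + 36 * s + 7) := by
    omega
  rw [e1, e2, pow_add, pow_add, pow_add] at hsum3
  have hfac : a ^ (48 * s2 + 24 * s + 2)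
      * (1 + a ^ (48 * s2 + 36 * s + 7)
          + a ^ (48 * s2 + 36 * s + 7) * a ^ (48 * s2 + 36 * s + 7)) = 0 := by
    linear_combination hsum3
  have hb : 1 + a ^ (48 * s2 + 36 * s + 7)
      + a ^ (48 * s2 + 36 * s + 7) * a ^ (48 * s2 + 36 * s + 7) = 0 :=
    (mul_eq_zero.mp hfac).resolve_left (pow_ne_zero _ ha)
  set b : F := a ^ (48 * s2 + 36 * s + 7) with hbdef
  constructor
  · -- a^(q²+q+1) = 1
    rw [show (2 ^ n) ^ 2 + 2 ^ n + 1 = (48 * s2 + 36 * s + 7) * 3 by omega, pow_mul]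
    rw [← hbdef]
    linear_combination (b + 1) * hb - (b * b + b + 1) * h2F
  · -- a^((q²+q+1)/3) ≠ 1
    rw [show (2 ^ n) ^ 2 + 2 ^ n + 1 = 3 * (48 * s2 + 36 * s + 7) by omega,
      Nat.mul_div_cancel_left _ (by norm_num)]
    rw [← hbdef]
    intro h1
    rw [h1] at hb
    have : (1:F) = 0 := by linear_combination hb - h2F
    exact one_ne_zero this
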